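/- Let v, w : ℝ → ℝ be continuous and 2π-periodic. Then |C̃(v) − C̃(w)| ≤ 2√(2π) · (∫₀^{2π} (v(x) − w(x))² dx)^{1/2}. -/

import Mathlib

open Real intervalIntegral

/-- The mean value `f̄ = (1/(2π)) ∫₀^{2π} f(y) dy` of a `2π`-periodic function. -/
noncomputable def fmean (f : ℝ → ℝ) : ℝ := (1 / (2 * π)) * ∫ y in (0:ℝ)..(2 * π), f y

/-- The antiderivative operator `𝒟`, the realization on continuous functions of the
maximal Tseng generalized inverse `∂ₓ†` of the spatial derivative on `𝕊 = ℝ/2πℤ`. -/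
noncomputable def Dop (f : ℝ → ℝ) (x : ℝ) : ℝ :=
  (∫ y in (0:ℝ)..x, (f y - fmean f)) -
    (1 / (2 * π)) * ∫ z in (0:ℝ)..(2 * π), (∫ y in (0:ℝ)..z, (f y - fmean f))

/-- `C̃(v) = ∫₀^{2π} cos(v(x)) ⬝ 𝒟(sin∘v)(x) dx`. -/
noncomputable def Ctilde (v : ℝ → ℝ) : ℝ :=
  ∫ x in (0:ℝ)..(2 * π), Real.cos (v x) * Dop (fun y => Real.sin (v y)) x

section myhelpers
open MeasureTheory Set Complex AddCircle

lemma my_cs {a b : ℝ → ℝ} (ha : Continuous a) (hb : Continuous b) :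
    |∫ x in (0:ℝ)..(2*π), a x * b x| ≤
      Real.sqrt (∫ x in (0:ℝ)..(2*π), (a x)^2) * Real.sqrt (∫ x in (0:ℝ)..(2*π), (b x)^2) := by
  have h2π : (0:ℝ) ≤ 2*π := by positivity
  set μ := volume.restrict (Ioc (0:ℝ) (2*π)) with hμ
  haveI : IsFiniteMeasure μ := by
    constructor
    rw [hμ, Measure.restrict_apply_univ]
    exact measure_Ioc_lt_top
  have hmem : ∀ {f : ℝ → ℝ}, Continuous f → MeasureTheory.MemLp f 2 μ := by
    intro f hf
    obtain ⟨C, hC⟩ := (isCompact_Icc (a := (0:ℝ)) (b := 2*π)).exists_bound_of_continuousOn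
      hf.continuousOn
    refine MeasureTheory.MemLp.of_bound hf.aestronglyMeasurable C ?_
    rw [hμ, MeasureTheory.ae_restrict_iff' measurableSet_Ioc]
    filter_upwards with x hx
    exact hC x ⟨hx.1.le, hx.2⟩
  have hpq : Real.HolderConjugate 2 2 := ⟨by norm_num, by norm_num, by norm_num⟩
  have key := MeasureTheory.integral_mul_norm_le_Lp_mul_Lq (μ := μ) hpq
    (by simpa using hmem ha) (by simpa using hmem hb)
  rw [intervalIntegral.integral_of_le h2π, intervalIntegral.integral_of_le h2π,
    intervalIntegral.integral_of_le h2π]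
  have habs : |∫ x, a x * b x ∂μ| ≤ ∫ x, ‖a x‖ * ‖b x‖ ∂μ := by
    rw [← Real.norm_eq_abs]
    refine (MeasureTheory.norm_integral_le_integral_norm _).trans_eq ?_
    simp [norm_mul]
  refine habs.trans (key.trans_eq ?_)
  have e1 : ∀ (f : ℝ → ℝ), (∫ x, ‖f x‖ ^ (2:ℝ) ∂μ) = ∫ x, (f x)^2 ∂μ := by
    intro f
    refine integral_congr_ae (Filter.Eventually.of_forall fun x => ?_)
    simp [Real.rpow_two, sq_abs]
  rw [e1, e1, ← Real.sqrt_eq_rpow, ← Real.sqrt_eq_rpow]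

lemma my_lip_cos (a b : ℝ) : |Real.cos a - Real.cos b| ≤ |a - b| := by
  have := Convex.norm_image_sub_le_of_norm_hasDerivWithin_le
    (f := Real.cos) (f' := fun x => -Real.sin x) (s := Set.univ) (C := 1)
    (fun x _ => (Real.hasDerivAt_cos x).hasDerivWithinAt)
    (fun x _ => by simp [abs_le, Real.neg_one_le_sin, Real.sin_le_one])
    convex_univ (Set.mem_univ b) (Set.mem_univ a)
  simpa [Real.norm_eq_abs] using this

lemma my_lip_sin (a b : ℝ) : |Real.sin a - Real.sin b| ≤ |a - b| := by
  have := Convex.norm_image_sub_le_of_norm_hasDerivWithin_le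
    (f := Real.sin) (f' := fun x => Real.cos x) (s := Set.univ) (C := 1)
    (fun x _ => (Real.hasDerivAt_sin x).hasDerivWithinAt)
    (fun x _ => by simp [abs_le, Real.neg_one_le_cos, Real.cos_le_one])
    convex_univ (Set.mem_univ b) (Set.mem_univ a)
  simpa [Real.norm_eq_abs] using this

lemma my_wirtinger {G g : ℝ → ℝ} (hG : Continuous G) (hg : Continuous g)
    (hd : ∀ x, HasDerivAt G (g x) x) (hGper : G 0 = G (2*π)) (hgper : g 0 = g (2*π))
    (hmean : (∫ x in (0:ℝ)..(2*π), G x) = 0) :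
    (∫ x in (0:ℝ)..(2*π), (G x)^2) ≤ ∫ x in (0:ℝ)..(2*π), (g x)^2 := by
  have hπ : (0:ℝ) < 2*π := by positivity
  haveI hT : Fact ((0:ℝ) < 2*π) := ⟨hπ⟩
  have hab : (0:ℝ) < 0 + 2*π := lt_add_of_pos_right 0 hπ
  -- Parseval for a continuous periodic real function
  have parseval : ∀ (H : ℝ → ℝ), Continuous H → H 0 = H (2*π) →
      Summable (fun n : ℤ => ‖fourierCoeffOn hab (fun x => (H x : ℂ)) n‖^2) ∧
      (∑' n : ℤ, ‖fourierCoeffOn hab (fun x => (H x : ℂ)) n‖^2)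
        = (1/(2*π)) * ∫ x in (0:ℝ)..(0 + 2*π), (H x)^2 := by
    intro H hH hHper
    set Hc : ℝ → ℂ := fun x => (H x : ℂ) with hHc
    have hHcc : Continuous Hc := Complex.continuous_ofReal.comp hH
    have hHcper : Hc 0 = Hc (2*π) := by simp [hHc, hHper]
    set F : C(AddCircle (2*π), ℂ) :=
      ⟨AddCircle.liftIco (2*π) 0 Hc, AddCircle.liftIco_zero_continuous hHcper hHcc.continuousOn⟩
      with hF
    have hcoeff : ∀ n : ℤ, fourierCoeff (⇑(ContinuousMap.toLp 2 haarAddCircle ℂ F) :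
        AddCircle (2*π) → ℂ) n = fourierCoeffOn hab Hc n := by
      intro n
      rw [fourierCoeff_toLp]
      exact fourierCoeff_liftIco_eq Hc n
    constructor
    · have hmem := lp.memℓp (fourierBasis.repr (ContinuousMap.toLp 2 haarAddCircle ℂ F))
      rw [memℓp_gen_iff (by norm_num : (0:ℝ) < (2:ENNReal).toReal)] at hmem
      refine Summable.congr hmem fun n => ?_
      rw [fourierBasis_repr, hcoeff n]
      norm_num [Real.rpow_two]
    · have hP := tsum_sq_fourierCoeff (ContinuousMap.toLp 2 haarAddCircle ℂ F)
      have hL : (∑' n : ℤ, ‖fourierCoeff (⇑(ContinuousMap.toLp 2 haarAddCircle ℂ F) :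
          AddCircle (2*π) → ℂ) n‖^2) = ∑' n : ℤ, ‖fourierCoeffOn hab Hc n‖^2 := by
        congr 1; funext n; rw [hcoeff n]
      rw [hL] at hP
      rw [hP]
      -- now compute the right-hand side
      have h1 : (∫ t : AddCircle (2*π), ‖(ContinuousMap.toLp 2 haarAddCircle ℂ F) t‖^2
          ∂haarAddCircle) = ∫ t : AddCircle (2*π), ‖F t‖^2 ∂haarAddCircle := by
        refine integral_congr_ae ?_
        filter_upwards [ContinuousMap.coeFn_toLp (p := 2) (μ := haarAddCircle) (𝕜 := ℂ) F] with t ht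
        rw [ht]
      have h2 : (∫ t : AddCircle (2*π), ‖F t‖^2) =
          (2*π) * ∫ t : AddCircle (2*π), ‖F t‖^2 ∂haarAddCircle := by
        rw [volume_eq_smul_haarAddCircle, MeasureTheory.integral_smul_measure, ENNReal.toReal_ofReal hπ.le,
          smul_eq_mul]
      have h3 : (∫ x in (0:ℝ)..(0 + 2*π), ‖F (x : AddCircle (2*π))‖^2) =
          ∫ t : AddCircle (2*π), ‖F t‖^2 :=
        AddCircle.intervalIntegral_preimage (2*π) 0 (fun t => ‖F t‖^2)
      have h4 : (∫ x in (0:ℝ)..(0 + 2*π), ‖F (x : AddCircle (2*π))‖^2) =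
          ∫ x in (0:ℝ)..(0 + 2*π), (H x)^2 := by
        rw [intervalIntegral.integral_of_le hab.le, intervalIntegral.integral_of_le hab.le,
          integral_Ioc_eq_integral_Ioo, integral_Ioc_eq_integral_Ioo]
        refine setIntegral_congr_fun measurableSet_Ioo fun x hx => ?_
        have hx' : x ∈ Ico (0:ℝ) (0 + 2*π) := ⟨hx.1.le, hx.2⟩
        rw [hF]
        show ‖AddCircle.liftIco (2*π) 0 Hc (x : AddCircle (2*π))‖^2 = (H x)^2
        rw [AddCircle.liftIco_coe_apply hx']
        simp [hHc, _root_.sq_abs]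
      rw [h1, ← h4, h3, h2]
      field_simp
  obtain ⟨sG, pG⟩ := parseval G hG hGper
  obtain ⟨sg, pg⟩ := parseval g hg hgper
  -- termwise comparison of Fourier coefficients
  have hterm : ∀ n : ℤ, ‖fourierCoeffOn hab (fun x => (G x : ℂ)) n‖^2 ≤
      ‖fourierCoeffOn hab (fun x => (g x : ℂ)) n‖^2 := by
    intro n
    rcases eq_or_ne n 0 with rfl | hn
    · have : fourierCoeffOn hab (fun x => (G x : ℂ)) 0 = 0 := by
        rw [fourierCoeffOn_eq_integral]
        simp only [neg_zero, fourier_zero, one_smul]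
        have : (∫ x in (0:ℝ)..(0 + 2*π), ((G x : ℂ))) = ((∫ x in (0:ℝ)..(0 + 2*π), G x : ℝ) : ℂ) := by
          exact_mod_cast intervalIntegral.integral_ofReal (f := G)
        rw [this, zero_add, hmean]
        simp
      rw [this, norm_zero]
      norm_num
    · have h1 := fourierCoeffOn_of_hasDerivAt hab hn
        (f := fun x => (G x : ℂ)) (f' := fun x => (g x : ℂ))
        (fun x _ => (hd x).ofReal_comp)
        ((Complex.continuous_ofReal.comp hg).intervalIntegrable _ _)
      have h0 : ((G (0 + 2*π) : ℂ)) - ((G 0 : ℂ)) = 0 := by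
        rw [zero_add, hGper]; ring
      rw [h0, mul_zero, zero_sub] at h1
      have hnormn : ‖(1:ℂ)/(-2*(π:ℂ)*Complex.I*(n:ℂ))‖ = 1/(2*π*|(n:ℝ)|) := by
        simp [norm_div, map_mul, Complex.norm_real, Complex.norm_I,
          Complex.norm_intCast, abs_of_pos Real.pi_pos]
      have hsc : ‖(((0:ℝ) + 2*π : ℝ) : ℂ) - (((0:ℝ)) : ℂ)‖ = 2*π := by
        rw [← Complex.ofReal_sub, Complex.norm_real, Real.norm_eq_abs,
          abs_of_pos (by linarith : (0:ℝ) < 0 + 2*π - 0)]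
        ring
      have hnormG : ‖fourierCoeffOn hab (fun x => (G x : ℂ)) n‖ =
          (1/(2*π*|(n:ℝ)|)) * ((2*π) * ‖fourierCoeffOn hab (fun x => (g x : ℂ)) n‖) := by
        rw [h1, norm_mul, norm_neg, norm_mul, hnormn, hsc]
      have hone : (1:ℝ) ≤ |(n:ℝ)| := by
        rw [← Int.cast_abs]
        exact_mod_cast Int.one_le_abs hn
    
      have hnpos : (0:ℝ) < |(n:ℝ)| := by linarith
      have : ‖fourierCoeffOn hab (fun x => (G x : ℂ)) n‖ ≤
          ‖fourierCoeffOn hab (fun x => (g x : ℂ)) n‖ := by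
        have hXn : (1/(2*π*|(n:ℝ)|)) * ((2*π) * ‖fourierCoeffOn hab (fun x => (g x : ℂ)) n‖)
            = ‖fourierCoeffOn hab (fun x => (g x : ℂ)) n‖ / |(n:ℝ)| := by
          field_simp
        rw [hnormG, hXn]
        exact div_le_self (norm_nonneg _) hone
      exact pow_le_pow_left₀ (norm_nonneg _) this 2
  have := Summable.tsum_le_tsum hterm sG sg
  rw [pG, pg] at this
  have h2 : (∫ x in (0:ℝ)..(0+2*π), (G x)^2) ≤ ∫ x in (0:ℝ)..(0+2*π), (g x)^2 := by
    have := mul_le_mul_of_nonneg_left this (le_of_lt hπ)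
    calc (∫ x in (0:ℝ)..(0+2*π), (G x)^2)
        = (2*π) * ((1/(2*π)) * ∫ x in (0:ℝ)..(0+2*π), (G x)^2) := by field_simp
      _ ≤ (2*π) * ((1/(2*π)) * ∫ x in (0:ℝ)..(0+2*π), (g x)^2) := this
      _ = ∫ x in (0:ℝ)..(0+2*π), (g x)^2 := by field_simp
  rwa [zero_add] at h2

lemma my_int_eq_fmean {f : ℝ → ℝ} :
    (∫ x in (0:ℝ)..(2*π), f x) = 2*π * fmean f := by
  rw [fmean]
  field_simp

lemma my_cont_prim {f : ℝ → ℝ} (hf : Continuous f) :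
    Continuous fun x => ∫ y in (0:ℝ)..x, (f y - fmean f) :=
  intervalIntegral.continuous_primitive
    (fun a b => ((hf.sub continuous_const).intervalIntegrable a b)) 0

lemma my_Dop_continuous {f : ℝ → ℝ} (hf : Continuous f) : Continuous (Dop f) :=
  (my_cont_prim hf).sub continuous_const

lemma my_Dop_hasDerivAt {f : ℝ → ℝ} (hf : Continuous f) (x : ℝ) :
    HasDerivAt (Dop f) (f x - fmean f) x :=
  (((hf.sub continuous_const).integral_hasStrictDerivAt 0 x).hasDerivAt).sub_const _

lemma my_int_sub_fmean {f : ℝ → ℝ} (hf : Continuous f) :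
    (∫ x in (0:ℝ)..(2*π), (f x - fmean f)) = 0 := by
  rw [intervalIntegral.integral_sub (hf.intervalIntegrable _ _) intervalIntegrable_const,
    intervalIntegral.integral_const, my_int_eq_fmean]
  simp [smul_eq_mul]

lemma my_Dop_boundary {f : ℝ → ℝ} (hf : Continuous f) : Dop f 0 = Dop f (2*π) := by
  unfold Dop
  rw [intervalIntegral.integral_same, my_int_sub_fmean hf]

lemma my_Dop_mean_zero {f : ℝ → ℝ} (hf : Continuous f) :
    (∫ x in (0:ℝ)..(2*π), Dop f x) = 0 := by
  unfold Dop
  rw [intervalIntegral.integral_sub ((my_cont_prim hf).intervalIntegrable _ _)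
    intervalIntegrable_const, intervalIntegral.integral_const]
  simp [smul_eq_mul]
  field_simp
  ring

lemma my_sq_le {a b : ℝ} (h : |a| ≤ |b|) : a^2 ≤ b^2 := by
  rw [← _root_.sq_abs a, ← _root_.sq_abs b]
  exact pow_le_pow_left₀ (abs_nonneg _) h 2

lemma my_fmean_sub {f g : ℝ → ℝ} (hf : Continuous f) (hg : Continuous g) :
    fmean (fun y => f y - g y) = fmean f - fmean g := by
  unfold fmean
  rw [intervalIntegral.integral_sub (hf.intervalIntegrable _ _) (hg.intervalIntegrable _ _)]
  ring

lemma my_Dop_sub {f g : ℝ → ℝ} (hf : Continuous f) (hg : Continuous g) (x : ℝ) :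
    Dop f x - Dop g x = Dop (fun y => f y - g y) x := by
  unfold Dop
  rw [my_fmean_sub hf hg]
  have h1 : ∀ t : ℝ, (∫ y in (0:ℝ)..t, (f y - g y - (fmean f - fmean g)))
      = (∫ y in (0:ℝ)..t, (f y - fmean f)) - ∫ y in (0:ℝ)..t, (g y - fmean g) := by
    intro t
    rw [intervalIntegral.integral_congr
      (g := fun y => (f y - fmean f) - (g y - fmean g)) (fun y _ => by ring)]
    exact intervalIntegral.integral_sub ((hf.sub continuous_const).intervalIntegrable _ _)
      ((hg.sub continuous_const).intervalIntegrable _ _)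
  have h2 : (∫ z in (0:ℝ)..(2*π), ∫ y in (0:ℝ)..z, (f y - g y - (fmean f - fmean g)))
      = (∫ z in (0:ℝ)..(2*π), ∫ y in (0:ℝ)..z, (f y - fmean f))
        - ∫ z in (0:ℝ)..(2*π), ∫ y in (0:ℝ)..z, (g y - fmean g) := by
    rw [intervalIntegral.integral_congr
      (g := fun z => (∫ y in (0:ℝ)..z, (f y - fmean f)) - ∫ y in (0:ℝ)..z, (g y - fmean g))
      (fun z _ => h1 z)]
    exact intervalIntegral.integral_sub ((my_cont_prim hf).intervalIntegrable _ _)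
      ((my_cont_prim hg).intervalIntegrable _ _)
  rw [h1 x, h2]
  ring

lemma my_sub_fmean_sq_le {f : ℝ → ℝ} (hf : Continuous f) :
    (∫ x in (0:ℝ)..(2*π), (f x - fmean f)^2) ≤ ∫ x in (0:ℝ)..(2*π), (f x)^2 := by
  rw [intervalIntegral.integral_congr
    (g := fun x => (f x)^2 - (2*fmean f) * f x + (fmean f)^2) (fun x _ => by ring)]
  rw [intervalIntegral.integral_add
      (Continuous.intervalIntegrable (by continuity) _ _) intervalIntegrable_const,
    intervalIntegral.integral_sub
      (Continuous.intervalIntegrable (by continuity) _ _)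
      (Continuous.intervalIntegrable (by continuity) _ _),
    intervalIntegral.integral_const_mul, intervalIntegral.integral_const]
  have hif := my_int_eq_fmean (f := f)
  simp only [smul_eq_mul, sub_zero]
  have h3 : 2*fmean f * (∫ x in (0:ℝ)..(2*π), f x) = 2*fmean f * (2*π*fmean f) := by
    rw [hif]
  nlinarith [mul_nonneg Real.pi_pos.le (sq_nonneg (fmean f)), h3]

lemma my_Dop_L2_le {f : ℝ → ℝ} (hf : Continuous f) (hper : f 0 = f (2*π)) :
    (∫ x in (0:ℝ)..(2*π), (Dop f x)^2) ≤ ∫ x in (0:ℝ)..(2*π), (f x)^2 := by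
  have h1 := my_wirtinger (my_Dop_continuous hf) (hf.sub continuous_const)
    (my_Dop_hasDerivAt hf) (my_Dop_boundary hf) (by simp only [Pi.sub_apply]; rw [hper]) (my_Dop_mean_zero hf)
  exact h1.trans (my_sub_fmean_sq_le hf)

end myhelpers

/-- Lipschitz-type estimate for the functional `C̃`:
`|C̃(v) − C̃(w)| ≤ 2√(2π) ⬝ ‖v − w‖_{L²(0,2π)}`. -/
theorem Ctilde_lipschitz (v w : ℝ → ℝ)
    (hv : Continuous v) (hvp : Function.Periodic v (2 * π))
    (hw : Continuous w) (hwp : Function.Periodic w (2 * π)) :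
    |Ctilde v - Ctilde w| ≤
      2 * Real.sqrt (2 * π) * Real.sqrt (∫ x in (0:ℝ)..(2 * π), (v x - w x) ^ 2) := by
  have h2π : (0:ℝ) ≤ 2*π := by positivity
  have hf₁ : Continuous fun y => Real.sin (v y) := Real.continuous_sin.comp hv
  have hf₂ : Continuous fun y => Real.sin (w y) := Real.continuous_sin.comp hw
  have hc₁ : Continuous fun x => Real.cos (v x) := Real.continuous_cos.comp hv
  have hc₂ : Continuous fun x => Real.cos (w x) := Real.continuous_cos.comp hw
  have hD₁ : Continuous (Dop fun y => Real.sin (v y)) := my_Dop_continuous hf₁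
  have hD₂ : Continuous (Dop fun y => Real.sin (w y)) := my_Dop_continuous hf₂
  have hv0 : v (2*π) = v 0 := by simpa using hvp 0
  have hw0 : w (2*π) = w 0 := by simpa using hwp 0
  have key : Ctilde v - Ctilde w =
      (∫ x in (0:ℝ)..(2*π),
        (Real.cos (v x) - Real.cos (w x)) * Dop (fun y => Real.sin (v y)) x)
      + ∫ x in (0:ℝ)..(2*π), Real.cos (w x) *
          ((Dop (fun y => Real.sin (v y)) x) - Dop (fun y => Real.sin (w y)) x) := by
    unfold Ctilde
    rw [← intervalIntegral.integral_sub (f := fun x => Real.cos (v x) * Dop (fun y => Real.sin (v y)) x)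
          (g := fun x => Real.cos (w x) * Dop (fun y => Real.sin (w y)) x) ((hc₁.mul hD₁).intervalIntegrable _ _)
        ((hc₂.mul hD₂).intervalIntegrable _ _),
      ← intervalIntegral.integral_add
          (f := fun x => (Real.cos (v x) - Real.cos (w x)) * Dop (fun y => Real.sin (v y)) x)
          (g := fun x => Real.cos (w x) *
            ((Dop (fun y => Real.sin (v y)) x) - Dop (fun y => Real.sin (w y)) x)) (((hc₁.sub hc₂).mul hD₁).intervalIntegrable _ _)
        ((hc₂.mul (hD₁.sub hD₂)).intervalIntegrable _ _)]
    exact intervalIntegral.integral_congr fun x _ => by ring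
  have hA := my_cs (hc₁.sub hc₂) hD₁
  have hIA : (∫ x in (0:ℝ)..(2*π), (Real.cos (v x) - Real.cos (w x))^2)
      ≤ ∫ x in (0:ℝ)..(2*π), (v x - w x)^2 :=
    intervalIntegral.integral_mono_on h2π
      (Continuous.intervalIntegrable (by continuity) _ _)
      (Continuous.intervalIntegrable (by continuity) _ _)
      (fun x _ => my_sq_le (my_lip_cos (v x) (w x)))
  have hD₁sq : (∫ x in (0:ℝ)..(2*π), (Dop (fun y => Real.sin (v y)) x)^2) ≤ 2*π := by
    refine (my_Dop_L2_le hf₁ (by simp [hv0])).trans ?_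
    have h1 : (∫ x in (0:ℝ)..(2*π), (Real.sin (v x))^2) ≤ ∫ x in (0:ℝ)..(2*π), (1:ℝ) :=
      intervalIntegral.integral_mono_on h2π
        (Continuous.intervalIntegrable (by continuity) _ _) intervalIntegrable_const
        (fun x _ => Real.sin_sq_le_one (v x))
    simpa using h1
  have hBrw : (∫ x in (0:ℝ)..(2*π), Real.cos (w x) *
        ((Dop (fun y => Real.sin (v y)) x) - Dop (fun y => Real.sin (w y)) x))
      = ∫ x in (0:ℝ)..(2*π), Real.cos (w x) *
          Dop (fun y => Real.sin (v y) - Real.sin (w y)) x :=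
    intervalIntegral.integral_congr fun x _ => by rw [my_Dop_sub hf₁ hf₂]
  have hB := my_cs hc₂ (my_Dop_continuous (hf₁.sub hf₂))
  have hc₂sq : (∫ x in (0:ℝ)..(2*π), (Real.cos (w x))^2) ≤ 2*π := by
    have h1 : (∫ x in (0:ℝ)..(2*π), (Real.cos (w x))^2) ≤ ∫ x in (0:ℝ)..(2*π), (1:ℝ) :=
      intervalIntegral.integral_mono_on h2π
        (Continuous.intervalIntegrable (by continuity) _ _) intervalIntegrable_const
        (fun x _ => Real.cos_sq_le_one (w x))
    simpa using h1
  have hDh : (∫ x in (0:ℝ)..(2*π), (Dop (fun y => Real.sin (v y) - Real.sin (w y)) x)^2)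
      ≤ ∫ x in (0:ℝ)..(2*π), (v x - w x)^2 := by
    refine (my_Dop_L2_le (hf₁.sub hf₂) (by simp [hv0, hw0])).trans ?_
    exact intervalIntegral.integral_mono_on h2π
      (Continuous.intervalIntegrable (by continuity) _ _)
      (Continuous.intervalIntegrable (by continuity) _ _)
      (fun x _ => my_sq_le (my_lip_sin (v x) (w x)))
  have hS : (0:ℝ) ≤ Real.sqrt (∫ x in (0:ℝ)..(2*π), (v x - w x)^2) := Real.sqrt_nonneg _
  calc |Ctilde v - Ctilde w|
      ≤ |∫ x in (0:ℝ)..(2*π),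
            (Real.cos (v x) - Real.cos (w x)) * Dop (fun y => Real.sin (v y)) x|
        + |∫ x in (0:ℝ)..(2*π), Real.cos (w x) *
            ((Dop (fun y => Real.sin (v y)) x) - Dop (fun y => Real.sin (w y)) x)| := by
        rw [key]; exact abs_add_le _ _
    _ ≤ Real.sqrt (∫ x in (0:ℝ)..(2*π), (Real.cos (v x) - Real.cos (w x))^2) *
          Real.sqrt (∫ x in (0:ℝ)..(2*π), (Dop (fun y => Real.sin (v y)) x)^2)
        + Real.sqrt (∫ x in (0:ℝ)..(2*π), (Real.cos (w x))^2) *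
          Real.sqrt (∫ x in (0:ℝ)..(2*π),
            (Dop (fun y => Real.sin (v y) - Real.sin (w y)) x)^2) := by
        refine add_le_add hA ?_
        rw [hBrw]
        exact hB
    _ ≤ Real.sqrt (∫ x in (0:ℝ)..(2*π), (v x - w x)^2) * Real.sqrt (2*π)
        + Real.sqrt (2*π) * Real.sqrt (∫ x in (0:ℝ)..(2*π), (v x - w x)^2) := by
        refine add_le_add
          (mul_le_mul (Real.sqrt_le_sqrt hIA) (Real.sqrt_le_sqrt hD₁sq)
            (Real.sqrt_nonneg _) hS)
          (mul_le_mul (Real.sqrt_le_sqrt hc₂sq) (Real.sqrt_le_sqrt hDh)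
            (Real.sqrt_nonneg _) (Real.sqrt_nonneg _))
    _ = 2 * Real.sqrt (2 * π) * Real.sqrt (∫ x in (0:ℝ)..(2 * π), (v x - w x) ^ 2) := by
        ring
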